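/- (Fundamental Theorem of the Differential Transfer Matrix Method.) Let p, q, r : ℝ → ℝ → ℂ be coefficient functions, let A, B : ℝ → ℝ → ℂ be C³ functions of (x,k) such that for every fixed k the functions x ↦ A(x;k) and x ↦ B(x;k) satisfy p(x;k)·∂ₓₓg + q(x;k)·∂ₓg + r(x;k)·g = 0 for all x, let k : ℝ → ℝ be differentiable, and suppose the Wronskian W(x) = A(x;k(x))·∂ₓB(x;k(x)) − ∂ₓA(x;k(x))·B(x;k(x)) is nonzero for all x in an interval I. If a, b : ℝ → ℂ are differentiable on I and satisfy the envelope system a' = u₁₁a + u₁₂b, b' = u₂₁a + u₂₂b with the kernel matrix built from A, B, k, then f(x) = a(x)A(x;k(x)) + b(x)B(x;k(x)) satisfies the extended equation p(x;k(x))·f''(x) + q(x;k(x))·f'(x) + r(x;k(x))·f(x) = 0 for all x in I. -/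

import Mathlib

/-- Partial derivative in `x` of a basis function `F(x;k)`. -/
noncomputable def pdx (F : ℝ → ℝ → ℂ) (x k : ℝ) : ℂ := deriv (fun x' => F x' k) x

/-- Partial derivative in `k` of a basis function `F(x;k)`. -/
noncomputable def pdk (F : ℝ → ℝ → ℂ) (x k : ℝ) : ℂ := deriv (fun k' => F x k') k

/-- Mixed partial derivative: the `k`-derivative of the `x`-derivative of `F(x;k)`. -/
noncomputable def pdxk (F : ℝ → ℝ → ℂ) (x k : ℝ) : ℂ := deriv (fun k' => pdx F x k') k

/-- Second partial derivative in `x` of a basis function `F(x;k)`. -/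
noncomputable def pdxx (F : ℝ → ℝ → ℂ) (x k : ℝ) : ℂ := deriv (fun x' => pdx F x' k) x

/-- The Wronskian `W(x;k) = A ∂ₓB − ∂ₓA B` of the basis functions. -/
noncomputable def wron (A B : ℝ → ℝ → ℂ) (x k : ℝ) : ℂ :=
  A x k * pdx B x k - pdx A x k * B x k

/-- Kernel matrix entry `u₁₁ = k'(∂ₓₖA·B − ∂ₖA·∂ₓB)/W`, evaluated at `(x, k(x))`. -/
noncomputable def u11 (A B : ℝ → ℝ → ℂ) (k : ℝ → ℝ) (x : ℝ) : ℂ :=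
  (Complex.ofReal (deriv k x)) * (pdxk A x (k x) * B x (k x) - pdk A x (k x) * pdx B x (k x)) /
    wron A B x (k x)

/-- Kernel matrix entry `u₁₂ = k'(∂ₓₖB·B − ∂ₖB·∂ₓB)/W`, evaluated at `(x, k(x))`. -/
noncomputable def u12 (A B : ℝ → ℝ → ℂ) (k : ℝ → ℝ) (x : ℝ) : ℂ :=
  (Complex.ofReal (deriv k x)) * (pdxk B x (k x) * B x (k x) - pdk B x (k x) * pdx B x (k x)) /
    wron A B x (k x)

/-- Kernel matrix entry `u₂₁ = k'(∂ₖA·∂ₓA − ∂ₓₖA·A)/W`, evaluated at `(x, k(x))`. -/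
noncomputable def u21 (A B : ℝ → ℝ → ℂ) (k : ℝ → ℝ) (x : ℝ) : ℂ :=
  (Complex.ofReal (deriv k x)) * (pdk A x (k x) * pdx A x (k x) - pdxk A x (k x) * A x (k x)) /
    wron A B x (k x)

/-- Kernel matrix entry `u₂₂ = k'(∂ₓA·∂ₖB − A·∂ₓₖB)/W`, evaluated at `(x, k(x))`. -/
noncomputable def u22 (A B : ℝ → ℝ → ℂ) (k : ℝ → ℝ) (x : ℝ) : ℂ :=
  (Complex.ofReal (deriv k x)) * (pdx A x (k x) * pdk B x (k x) - A x (k x) * pdxk B x (k x)) /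
    wron A B x (k x)

lemma slice_x (G : ℝ × ℝ → ℂ) (hG : Differentiable ℝ G) (x κ : ℝ) :
    HasDerivAt (fun x' => G (x', κ)) (fderiv ℝ G (x, κ) (1, 0)) x := by
  have h1 : HasDerivAt (fun x' : ℝ => (x', κ)) ((1 : ℝ), (0 : ℝ)) x :=
    (hasDerivAt_id x).prodMk (hasDerivAt_const x κ)
  exact (hG (x, κ)).hasFDerivAt.comp_hasDerivAt x h1

lemma slice_k (G : ℝ × ℝ → ℂ) (hG : Differentiable ℝ G) (x κ : ℝ) :
    HasDerivAt (fun κ' => G (x, κ')) (fderiv ℝ G (x, κ) (0, 1)) κ := by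
  have h1 : HasDerivAt (fun κ' : ℝ => (x, κ')) ((0 : ℝ), (1 : ℝ)) κ :=
    (hasDerivAt_const κ x).prodMk (hasDerivAt_id κ)
  exact (hG (x, κ)).hasFDerivAt.comp_hasDerivAt κ h1

lemma curve_deriv (G : ℝ × ℝ → ℂ) (hG : Differentiable ℝ G) (k : ℝ → ℝ)
    (hk : Differentiable ℝ k) (x : ℝ) :
    HasDerivAt (fun y => G (y, k y))
      (fderiv ℝ G (x, k x) (1, 0) + Complex.ofReal (deriv k x) * fderiv ℝ G (x, k x) (0, 1)) x := by
  have hc : HasDerivAt (fun y : ℝ => (y, k y)) ((1 : ℝ), deriv k x) x :=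
    (hasDerivAt_id x).prodMk (hk x).hasDerivAt
  have h := (hG (x, k x)).hasFDerivAt.comp_hasDerivAt x hc
  have e : ((1 : ℝ), deriv k x) = ((1 : ℝ), (0 : ℝ)) + deriv k x • ((0 : ℝ), (1 : ℝ)) := by
    simp
  rw [e, map_add, map_smul, Complex.real_smul] at h
  exact h

lemma pdx_eq_fderiv (F : ℝ → ℝ → ℂ) (hF : Differentiable ℝ fun pt : ℝ × ℝ => F pt.1 pt.2)
    (x κ : ℝ) : pdx F x κ = fderiv ℝ (fun pt : ℝ × ℝ => F pt.1 pt.2) (x, κ) (1, 0) :=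
  (slice_x _ hF x κ).deriv

lemma pdk_eq_fderiv (F : ℝ → ℝ → ℂ) (hF : Differentiable ℝ fun pt : ℝ × ℝ => F pt.1 pt.2)
    (x κ : ℝ) : pdk F x κ = fderiv ℝ (fun pt : ℝ × ℝ => F pt.1 pt.2) (x, κ) (0, 1) :=
  (slice_k _ hF x κ).deriv

lemma hasDerivAt_comp_curve (F : ℝ → ℝ → ℂ)
    (hF : ContDiff ℝ 3 fun pt : ℝ × ℝ => F pt.1 pt.2)
    (k : ℝ → ℝ) (hk : Differentiable ℝ k) (x : ℝ) :
    HasDerivAt (fun y => F y (k y))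
      (pdx F x (k x) + Complex.ofReal (deriv k x) * pdk F x (k x)) x := by
  have hd : Differentiable ℝ fun pt : ℝ × ℝ => F pt.1 pt.2 :=
    hF.differentiable (by norm_num)
  have h := curve_deriv _ hd k hk x
  rwa [← pdx_eq_fderiv F hd, ← pdk_eq_fderiv F hd] at h

lemma hasDerivAt_pdx_comp_curve (F : ℝ → ℝ → ℂ)
    (hF : ContDiff ℝ 3 fun pt : ℝ × ℝ => F pt.1 pt.2)
    (k : ℝ → ℝ) (hk : Differentiable ℝ k) (x : ℝ) :
    HasDerivAt (fun y => pdx F y (k y))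
      (pdxx F x (k x) + Complex.ofReal (deriv k x) * pdxk F x (k x)) x := by
  have hd : Differentiable ℝ fun pt : ℝ × ℝ => F pt.1 pt.2 :=
    hF.differentiable (by norm_num)
  set g : ℝ × ℝ → ℂ := fun pt => F pt.1 pt.2 with hg
  set gx : ℝ × ℝ → ℂ := fun pt => fderiv ℝ g pt (1, 0) with hgx
  have hgx2 : ContDiff ℝ 2 gx :=
    (hF.fderiv_right (by norm_num)).clm_apply contDiff_const
  have hgxd : Differentiable ℝ gx := hgx2.differentiable (by norm_num)
  have hpdx : ∀ y κ, pdx F y κ = gx (y, κ) := fun y κ => pdx_eq_fderiv F hd y κ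
  have hxx : pdxx F x (k x) = fderiv ℝ gx (x, k x) (1, 0) := by
    have : (fun x' => pdx F x' (k x)) = fun x' => gx (x', k x) := funext fun y => hpdx y (k x)
    rw [pdxx, this]
    exact (slice_x gx hgxd x (k x)).deriv
  have hxk : pdxk F x (k x) = fderiv ℝ gx (x, k x) (0, 1) := by
    have : (fun κ' => pdx F x κ') = fun κ' => gx (x, κ') := funext fun κ => hpdx x κ
    rw [pdxk, this]
    exact (slice_k gx hgxd x (k x)).deriv
  have h := curve_deriv gx hgxd k hk x
  rw [← hxx, ← hxk] at h
  have : (fun y => pdx F y (k y)) = fun y => gx (y, k y) := funext fun y => hpdx y (k y)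
  rwa [this]

/-- Fundamental Theorem of the Differential Transfer Matrix Method:
if, for every fixed eigenvalue `k`, the basis functions `A(·;k)` and `B(·;k)` solve
the second-order equation `p g'' + q g' + r g = 0`, and the envelope coefficients
`a, b` satisfy the differential transfer matrix (envelope) system for the eigenvalue
function `k(x)`, then `f(x) = a(x)A(x;k(x)) + b(x)B(x;k(x))` solves the extended
equation `p(x;k(x)) f'' + q(x;k(x)) f' + r(x;k(x)) f = 0` on `I`. -/
theorem fundamental_theorem_DTMM
    (p q r : ℝ → ℝ → ℂ)
    (A B : ℝ → ℝ → ℂ)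
    (hA : ContDiff ℝ 3 fun pt : ℝ × ℝ => A pt.1 pt.2)
    (hB : ContDiff ℝ 3 fun pt : ℝ × ℝ => B pt.1 pt.2)
    (hAsol : ∀ (κ : ℝ) (x : ℝ),
      p x κ * pdxx A x κ + q x κ * pdx A x κ + r x κ * A x κ = 0)
    (hBsol : ∀ (κ : ℝ) (x : ℝ),
      p x κ * pdxx B x κ + q x κ * pdx B x κ + r x κ * B x κ = 0)
    (k : ℝ → ℝ) (hk : Differentiable ℝ k)
    (I : Set ℝ) (hI : IsOpen I)
    (hW : ∀ x ∈ I, wron A B x (k x) ≠ 0)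
    (a b : ℝ → ℂ)
    (ha : ∀ x ∈ I, HasDerivAt a (u11 A B k x * a x + u12 A B k x * b x) x)
    (hb : ∀ x ∈ I, HasDerivAt b (u21 A B k x * a x + u22 A B k x * b x) x) :
    ∀ x ∈ I,
      p x (k x) * deriv (deriv (fun y => a y * A y (k y) + b y * B y (k y))) x +
      q x (k x) * deriv (fun y => a y * A y (k y) + b y * B y (k y)) x +
      r x (k x) * (a x * A x (k x) + b x * B x (k x)) = 0 := by
  have claim1 : ∀ y ∈ I,
      HasDerivAt (fun z => a z * A z (k z) + b z * B z (k z))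
        (a y * pdx A y (k y) + b y * pdx B y (k y)) y := by
    intro y hy
    have h1 := ((ha y hy).mul (hasDerivAt_comp_curve A hA k hk y)).add
      ((hb y hy).mul (hasDerivAt_comp_curve B hB k hk y))
    convert h1 using 1
    case e'_4 => rfl
    case e'_8 => rfl
    have hW' := hW y hy
    simp only [wron] at hW'
    simp only [u11, u12, u21, u22, wron]
    have hW'' : pdx B y (k y) * A y (k y) - pdx A y (k y) * B y (k y) ≠ 0 := by
      intro h; apply hW'; linear_combination h
    field_simp
    ring
  have claim2 : ∀ y ∈ I,
      HasDerivAt (fun z => a z * pdx A z (k z) + b z * pdx B z (k z))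
        (a y * pdxx A y (k y) + b y * pdxx B y (k y)) y := by
    intro y hy
    have h1 := ((ha y hy).mul (hasDerivAt_pdx_comp_curve A hA k hk y)).add
      ((hb y hy).mul (hasDerivAt_pdx_comp_curve B hB k hk y))
    convert h1 using 1
    case e'_4 => rfl
    case e'_8 => rfl
    have hW' := hW y hy
    simp only [wron] at hW'
    simp only [u11, u12, u21, u22, wron]
    have hW'' : pdx B y (k y) * A y (k y) - B y (k y) * pdx A y (k y) ≠ 0 := by
      intro h; apply hW'; linear_combination h
    field_simp
    ring
  intro x hx
  have e1 : deriv (fun y => a y * A y (k y) + b y * B y (k y)) x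
      = a x * pdx A x (k x) + b x * pdx B x (k x) := (claim1 x hx).deriv
  have e2 : deriv (deriv (fun y => a y * A y (k y) + b y * B y (k y))) x
      = a x * pdxx A x (k x) + b x * pdxx B x (k x) := by
    have heq : deriv (fun y => a y * A y (k y) + b y * B y (k y))
        =ᶠ[nhds x] fun z => a z * pdx A z (k z) + b z * pdx B z (k z) := by
      filter_upwards [hI.mem_nhds hx] with y hy
      exact (claim1 y hy).deriv
    rw [heq.deriv_eq]
    exact (claim2 x hx).deriv
  rw [e1, e2]
  linear_combination a x * hAsol (k x) x + b x * hBsol (k x) x
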